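/- For every integer n ≥ 4, Z_n ≥ 2 · 2^{⌊(n−4)/3⌋}; consequently 8 · Z_n³ ≥ 2^n, i.e., Z_n ≥ (1/2) · 2^{n/3}, so Z_n grows at least like (∛2)^n. -/

import Mathlib

/-- `Z n` : the number of non-decreasing vectors `(ℓ₁,…,ℓ_n)` of positive integers
satisfying `Σ_{j=1}^n 2^{-ℓⱼ} = 1`. -/
noncomputable def Z (n : ℕ) : ℕ :=
  Nat.card {f : Fin n → ℕ // Monotone f ∧ (∀ j, 1 ≤ f j) ∧
    ∑ j, ((2 : ℚ) ^ f j)⁻¹ = 1}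

namespace Stmt15

def wq (ℓ : ℕ) : ℚ := ((2 : ℚ) ^ ℓ)⁻¹

lemma wq_pos (ℓ : ℕ) : 0 < wq ℓ := by rw [wq]; positivity

lemma wq_succ (m : ℕ) : wq (m + 1) = wq m / 2 := by
  simp [wq, pow_succ]; ring

/-- One step: replace the current deepest leaf by four new leaves. -/
def stepP (b : Bool) (p : List ℕ × ℕ) : List ℕ × ℕ :=
  if b then (p.1 ++ [p.2 + 2, p.2 + 2, p.2 + 2], p.2 + 2)
  else (p.1 ++ [p.2 + 1, p.2 + 2, p.2 + 3], p.2 + 3)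

def encode : List Bool → List ℕ × ℕ → List ℕ × ℕ
  | [], p => p
  | b :: bs, p => stepP b (encode bs p)

def sol (bs : List Bool) (p : List ℕ × ℕ) : List ℕ :=
  (encode bs p).1 ++ [(encode bs p).2]

structure Inv (p : List ℕ × ℕ) : Prop where
  pos : ∀ x ∈ p.1, 1 ≤ x
  le : ∀ x ∈ p.1, x ≤ p.2
  pos2 : 1 ≤ p.2
  sorted : p.1.Pairwise (· ≤ ·)
  kraft : ((p.1 ++ [p.2]).map wq).sum = 1

lemma stepP_inv {p : List ℕ × ℕ} (b : Bool) (h : Inv p) : Inv (stepP b p) := by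
  obtain ⟨F, m⟩ := p
  obtain ⟨hpos, hle, hp2, hs, hk⟩ := h
  simp only at hpos hle hp2 hs hk
  simp only [List.map_append, List.sum_append, List.map_cons, List.map_nil,
    List.sum_cons, List.sum_nil] at hk
  have e1 : wq (m + 1) = wq m / 2 := wq_succ m
  have e2 : wq (m + 2) = wq m / 4 := by
    rw [show m + 2 = (m + 1) + 1 from rfl, wq_succ, wq_succ]; ring
  have e3 : wq (m + 3) = wq m / 8 := by
    rw [show m + 3 = (m + 2) + 1 from rfl, wq_succ, e2]; ring
  cases b
  · refine ⟨?_, ?_, ?_, ?_, ?_⟩ <;> simp only [stepP, if_false, Bool.false_eq_true]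
    · intro x hx
      rcases List.mem_append.1 hx with hx | hx
      · exact hpos x hx
      · simp only [List.mem_cons, List.not_mem_nil, or_false] at hx; omega
    · intro x hx
      rcases List.mem_append.1 hx with hx | hx
      · have := hle x hx; omega
      · simp only [List.mem_cons, List.not_mem_nil, or_false] at hx; omega
    · omega
    · refine (List.pairwise_append).2 ⟨hs, ?_, ?_⟩
      · simp only [List.pairwise_cons, List.mem_cons, List.not_mem_nil, or_false,
          List.Pairwise.nil]
        exact ⟨by rintro y (rfl | rfl) <;> omega, by rintro y rfl; omega, by simp⟩
      · intro a ha c hc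
        have := hle a ha
        simp only [List.mem_cons, List.not_mem_nil, or_false] at hc
        omega
    · simp only [List.map_append, List.sum_append, List.map_cons, List.map_nil,
        List.sum_cons, List.sum_nil]
      rw [e1, e2, e3]; linarith
  · refine ⟨?_, ?_, ?_, ?_, ?_⟩ <;> simp only [stepP, if_true]
    · intro x hx
      rcases List.mem_append.1 hx with hx | hx
      · exact hpos x hx
      · simp only [List.mem_cons, List.not_mem_nil, or_false] at hx; omega
    · intro x hx
      rcases List.mem_append.1 hx with hx | hx
      · have := hle x hx; omega
      · simp only [List.mem_cons, List.not_mem_nil, or_false] at hx; omega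
    · omega
    · refine (List.pairwise_append).2 ⟨hs, ?_, ?_⟩
      · simp only [List.pairwise_cons, List.mem_cons, List.not_mem_nil, or_false,
          List.Pairwise.nil]
        exact ⟨by rintro y (rfl | rfl) <;> omega, by rintro y rfl; omega, by simp⟩
      · intro a ha c hc
        have := hle a ha
        simp only [List.mem_cons, List.not_mem_nil, or_false] at hc
        omega
    · simp only [List.map_append, List.sum_append, List.map_cons, List.map_nil,
        List.sum_cons, List.sum_nil]
      rw [e2]; linarith

lemma encode_inv (bs : List Bool) {p : List ℕ × ℕ} (h : Inv p) : Inv (encode bs p) := by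
  induction bs with
  | nil => exact h
  | cons b bs ih => exact stepP_inv b ih

lemma stepP_len (b : Bool) (p : List ℕ × ℕ) :
    (stepP b p).1.length = p.1.length + 3 := by
  cases b <;> simp [stepP]

lemma encode_len (bs : List Bool) (p : List ℕ × ℕ) :
    (encode bs p).1.length = p.1.length + 3 * bs.length := by
  induction bs with
  | nil => simp [encode]
  | cons b bs ih => rw [encode, stepP_len, ih]; simp; ring

lemma stepP_inj {b b' : Bool} {p p' : List ℕ × ℕ}
    (hl : p.1.length = p'.1.length) (h : stepP b p = stepP b' p') : b = b' ∧ p = p' := by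
  obtain ⟨F, m⟩ := p
  obtain ⟨F', m'⟩ := p'
  simp only at hl
  cases b <;> cases b' <;>
    simp only [stepP, if_true, if_false, Bool.false_eq_true, Prod.mk.injEq] at h <;>
    obtain ⟨h1, h2⟩ := h <;>
    obtain ⟨hF, hL⟩ := List.append_inj h1 hl <;>
    simp only [List.cons.injEq, and_true] at hL
  · exact ⟨rfl, by simp [hF]; omega⟩
  · omega
  · omega
  · exact ⟨rfl, by simp [hF]; omega⟩

lemma encode_inj : ∀ {bs bs' : List Bool} {p p' : List ℕ × ℕ},
    bs.length = bs'.length → p.1.length = p'.1.length →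
    encode bs p = encode bs' p' → bs = bs' ∧ p = p' := by
  intro bs
  induction bs with
  | nil =>
    intro bs' p p' hb hp h
    cases bs' with
    | nil => exact ⟨rfl, h⟩
    | cons b bs' => simp at hb
  | cons b bs ih =>
    intro bs' p p' hb hp h
    cases bs' with
    | nil => simp at hb
    | cons b' bs' =>
      simp only [List.length_cons, Nat.add_right_cancel_iff] at hb
      have hel : (encode bs p).1.length = (encode bs' p').1.length := by
        rw [encode_len, encode_len, hb, hp]
      obtain ⟨hbb, he⟩ := stepP_inj hel h
      obtain ⟨h1, h2⟩ := ih hb hp he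
      exact ⟨by rw [hbb, h1], h2⟩

lemma sol_inj {bs bs' : List Bool} {p p' : List ℕ × ℕ}
    (hb : bs.length = bs'.length) (hp : p.1.length = p'.1.length)
    (h : sol bs p = sol bs' p') : bs = bs' ∧ p = p' := by
  have hel : (encode bs p).1.length = (encode bs' p').1.length := by
    rw [encode_len, encode_len, hb, hp]
  obtain ⟨h1, h2⟩ := List.append_inj h hel
  apply encode_inj hb hp
  have : (encode bs p).2 = (encode bs' p').2 := by
    simpa using h2
  exact Prod.ext h1 this

def base (b : Bool) : ℕ → List ℕ × ℕ
  | 0 => if b then ([2, 2, 2], 2) else ([1, 2, 3], 3)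
  | 1 => if b then ([2, 2, 2, 3], 3) else ([1, 2, 3, 4], 4)
  | _ => if b then ([2, 2, 2, 3, 4], 4) else ([1, 2, 3, 4, 5], 5)

lemma base_inv (b : Bool) (r : ℕ) (hr : r < 3) : Inv (base b r) := by
  interval_cases r <;> cases b <;>
    refine ⟨?_, ?_, ?_, ?_, ?_⟩ <;>
    first
      | decide
      | (simp [base, wq]; norm_num)

lemma base_len (b : Bool) (r : ℕ) (hr : r < 3) : (base b r).1.length = r + 3 := by
  interval_cases r <;> cases b <;> simp [base]

lemma base_injb (r : ℕ) (hr : r < 3) : base true r ≠ base false r := by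
  interval_cases r <;> simp [base]

end Stmt15

open Stmt15 in
/-- Any solution is bounded: `f i < n ^ n + 1`. -/
lemma sol_bounded {n : ℕ} (f : Fin n → ℕ) (hmono : Monotone f)
    (hsum : ∑ j, ((2 : ℚ) ^ f j)⁻¹ = 1) (i : Fin n) :
    (2 : ℚ) ^ f i ≤ (n : ℚ) ^ (i.val + 1) := by
  have hn0 : 0 < n := i.pos
  have hn1 : (1 : ℚ) ≤ (n : ℚ) := by exact_mod_cast hn0
  suffices H : ∀ v, ∀ hv : v < n, (2 : ℚ) ^ f ⟨v, hv⟩ ≤ (n : ℚ) ^ (v + 1) by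
    simpa using H i.val i.2
  intro v
  induction v with
  | zero =>
    intro hv
    have hle : ∀ j : Fin n, ((2 : ℚ) ^ f j)⁻¹ ≤ ((2 : ℚ) ^ f ⟨0, hv⟩)⁻¹ := by
      intro j
      apply inv_anti₀ (by positivity)
      exact pow_le_pow_right₀ one_le_two (hmono (Fin.le_def.2 (Nat.zero_le _)))
    have h1 : (1 : ℚ) ≤ n * ((2 : ℚ) ^ f ⟨0, hv⟩)⁻¹ := by
      rw [← hsum]
      calc ∑ j, ((2 : ℚ) ^ f j)⁻¹
          ≤ ∑ _j : Fin n, ((2 : ℚ) ^ f ⟨0, hv⟩)⁻¹ := Finset.sum_le_sum fun j _ => hle j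
        _ = n * ((2 : ℚ) ^ f ⟨0, hv⟩)⁻¹ := by
            simp [Finset.sum_const, nsmul_eq_mul]
    rw [← div_eq_mul_inv] at h1
    have h2 : (2 : ℚ) ^ f ⟨0, hv⟩ ≤ n := (one_le_div (by positivity)).1 h1
    simpa using h2
  | succ v ih =>
    intro hv
    have hv' : v < n := Nat.lt_of_succ_lt hv
    set i : Fin n := ⟨v + 1, hv⟩ with hi
    set prev : Fin n := ⟨v, hv'⟩ with hprev
    set P := f prev with hP
    set S := Finset.univ.filter (fun j : Fin n => j.val < v + 1) with hS
    set A := ∑ j ∈ S, ((2 : ℚ) ^ f j)⁻¹ with hA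
    set B := ∑ j ∈ Finset.univ.filter (fun j : Fin n => ¬ j.val < v + 1), ((2 : ℚ) ^ f j)⁻¹
      with hB
    have hAB : A + B = 1 := by
      rw [hA, hB, Finset.sum_filter_add_sum_filter_not]; exact hsum
    have hfP : ∀ j ∈ S, f j ≤ P := by
      intro j hj
      rw [hS, Finset.mem_filter] at hj
      exact hmono (Fin.le_def.2 (Nat.lt_succ_iff.mp hj.2))
    set t := ∑ j ∈ S, 2 ^ (P - f j) with htdef
    have ht : A * 2 ^ P = (t : ℚ) := by
      rw [hA, htdef, Finset.sum_mul]
      push_cast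
      apply Finset.sum_congr rfl
      intro j hj
      have hfj := hfP j hj
      rw [eq_comm, inv_mul_eq_div, eq_div_iff (by positivity), ← pow_add,
        Nat.sub_add_cancel hfj]
    have hAeq : A = (t : ℚ) / 2 ^ P := by
      rw [eq_div_iff (by positivity : ((2:ℚ) ^ P) ≠ 0)]; exact ht
    have hBpos : 0 < B := by
      rw [hB]
      apply Finset.sum_pos (fun j _ => by positivity)
      exact ⟨i, by simp [hi]⟩
    have hA1 : A < 1 := by linarith
    have htlt : (t : ℚ) < 2 ^ P := by
      rw [hAeq, div_lt_one (by positivity)] at hA1; exact hA1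
    have ht1 : (t : ℚ) + 1 ≤ 2 ^ P := by
      have h' : t < 2 ^ P := by exact_mod_cast htlt
      exact_mod_cast Nat.succ_le_of_lt h'
    have hBge : ((2 : ℚ) ^ P)⁻¹ ≤ B := by
      have hA2 : A ≤ 1 - ((2 : ℚ) ^ P)⁻¹ := by
        rw [hAeq, div_le_iff₀ (by positivity)]
        have hinv : ((2 : ℚ) ^ P)⁻¹ * 2 ^ P = 1 := inv_mul_cancel₀ (by positivity)
        nlinarith [ht1]
      linarith
    have hBle : B ≤ n * ((2 : ℚ) ^ f i)⁻¹ := by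
      rw [hB]
      calc ∑ j ∈ Finset.univ.filter (fun j : Fin n => ¬ j.val < v + 1), ((2 : ℚ) ^ f j)⁻¹
          ≤ ∑ _j ∈ Finset.univ.filter (fun j : Fin n => ¬ j.val < v + 1),
              ((2 : ℚ) ^ f i)⁻¹ := by
            apply Finset.sum_le_sum
            intro j hj
            rw [Finset.mem_filter] at hj
            apply inv_anti₀ (by positivity)
            exact pow_le_pow_right₀ one_le_two (hmono (Fin.le_def.2 (Nat.le_of_not_lt hj.2)))
        _ = ((Finset.univ.filter (fun j : Fin n => ¬ j.val < v + 1)).card : ℚ) *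
              ((2 : ℚ) ^ f i)⁻¹ := by rw [Finset.sum_const, nsmul_eq_mul]
        _ ≤ n * ((2 : ℚ) ^ f i)⁻¹ := by
            apply mul_le_mul_of_nonneg_right _ (by positivity)
            exact_mod_cast le_trans (Finset.card_filter_le _ _) (le_of_eq (by simp))
    have key : (2 : ℚ) ^ f i ≤ n * 2 ^ P := by
      have h := le_trans hBge hBle
      rw [inv_eq_one_div, ← div_eq_mul_inv, div_le_div_iff₀ (by positivity) (by positivity)] at h
      linarith
    calc (2 : ℚ) ^ f i ≤ n * 2 ^ P := key
      _ ≤ n * n ^ (v + 1) := by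
          apply mul_le_mul_of_nonneg_left (ih hv') (by positivity)
      _ = n ^ (v + 1 + 1) := by ring

lemma sol_finite (n : ℕ) :
    Finite {f : Fin n → ℕ // Monotone f ∧ (∀ j, 1 ≤ f j) ∧
      ∑ j, ((2 : ℚ) ^ f j)⁻¹ = 1} := by
  set S := {f : Fin n → ℕ // Monotone f ∧ (∀ j, 1 ≤ f j) ∧
      ∑ j, ((2 : ℚ) ^ f j)⁻¹ = 1} with hSdef
  have hbound : ∀ (x : S) (i : Fin n), x.1 i < n ^ n + 1 := by
    intro x i
    have h1 : (2 : ℚ) ^ x.1 i ≤ (n : ℚ) ^ (i.val + 1) := sol_bounded x.1 x.2.1 x.2.2.2 i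
    have hn0 : 0 < n := i.pos
    have h2 : (n : ℚ) ^ (i.val + 1) ≤ (n : ℚ) ^ n :=
      pow_le_pow_right₀ (by exact_mod_cast hn0) i.2
    have h3 : (2 : ℕ) ^ x.1 i ≤ n ^ n := by exact_mod_cast le_trans h1 h2
    have h4 : x.1 i < 2 ^ x.1 i := Nat.lt_two_pow_self
    omega
  apply Finite.of_injective (fun x : S => (fun i => (⟨x.1 i, hbound x i⟩ : Fin (n ^ n + 1)) :
    Fin n → Fin (n ^ n + 1)))
  intro x x' h
  apply Subtype.ext
  funext i
  have := congrFun h i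
  simpa using congrArg Fin.val this

open Stmt15 in
theorem stmt15 (n : ℕ) (hn : 4 ≤ n) :
    2 * 2 ^ ((n - 4) / 3) ≤ Z n ∧
    2 ^ n ≤ 8 * (Z n) ^ 3 ∧
    (1 / 2 : ℝ) * (2 : ℝ) ^ ((n : ℝ) / 3) ≤ (Z n : ℝ) := by
  haveI hfin := sol_finite n
  set k := (n - 4) / 3 with hk
  set r := (n - 4) % 3 with hrdef
  have hr : r < 3 := Nat.mod_lt _ (by norm_num)
  have hnkr : n = 4 + 3 * k + r := by omega
  have hmain : 2 * 2 ^ k ≤ Z n := by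
    classical
    set L : Bool × (Fin k → Bool) → List ℕ :=
      fun x => sol (List.ofFn x.2) (base x.1 r) with hLdef
    have hInv : ∀ x : Bool × (Fin k → Bool), Inv (encode (List.ofFn x.2) (base x.1 r)) :=
      fun x => encode_inv _ (base_inv _ _ hr)
    have hLlen : ∀ x, (L x).length = n := by
      intro x
      simp only [hLdef, sol, List.length_append, List.length_cons, List.length_nil,
        encode_len, base_len _ _ hr, List.length_ofFn]
      omega
    have hsorted : ∀ x, (L x).Pairwise (· ≤ ·) := by
      intro x
      refine (List.pairwise_append).2 ⟨(hInv x).sorted, List.pairwise_singleton _ _, ?_⟩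
      intro a ha c hc
      simp only [List.mem_singleton] at hc
      subst hc
      exact (hInv x).le a ha
    have hposL : ∀ x, ∀ y ∈ L x, 1 ≤ y := by
      intro x y hy
      rcases List.mem_append.1 hy with hy | hy
      · exact (hInv x).pos y hy
      · simp only [List.mem_singleton] at hy; subst hy; exact (hInv x).pos2
    have hkraft : ∀ x, ((L x).map wq).sum = 1 := fun x => (hInv x).kraft
    -- build the injection into the solution set
    set Φ : Bool × (Fin k → Bool) → {f : Fin n → ℕ // Monotone f ∧ (∀ j, 1 ≤ f j) ∧
        ∑ j, ((2 : ℚ) ^ f j)⁻¹ = 1} := fun x =>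
      ⟨fun j => (L x).get (Fin.cast (hLlen x).symm j), by
        intro a b hab
        apply (hsorted x).rel_get_of_le
        simp only [Fin.le_def, Fin.coe_cast]
        exact hab, by
        intro j
        exact hposL x _ (List.get_mem _ _), by
        have e1 : ∑ j : Fin n, ((2:ℚ) ^ ((L x).get (Fin.cast (hLlen x).symm j)))⁻¹
            = ∑ i : Fin (L x).length, ((2:ℚ) ^ ((L x).get i))⁻¹ :=
          Fintype.sum_equiv (finCongr (hLlen x).symm) _ _ (fun j => rfl)
        have e2 : ∑ i : Fin (L x).length, ((2:ℚ) ^ ((L x).get i))⁻¹ = ((L x).map wq).sum := by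
          rw [← List.sum_ofFn]
          congr 1
          rw [← List.ofFn_getElem_eq_map]
          rfl
        rw [e1, e2, hkraft x]⟩ with hΦdef
    have hΦinj : Function.Injective Φ := by
      intro x x' hxx
      have hf : (fun j : Fin n => (L x).get (Fin.cast (hLlen x).symm j))
          = (fun j : Fin n => (L x').get (Fin.cast (hLlen x').symm j)) := by
        have := congrArg Subtype.val hxx
        simpa [hΦdef] using this
      have hLL : L x = L x' := by
        apply List.ext_get (by rw [hLlen, hLlen])
        intro i h1 h2
        have hi : i < n := by rw [← hLlen x]; exact h1
        exact congrFun hf ⟨i, hi⟩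
      have hlen2 : (List.ofFn x.2).length = (List.ofFn x'.2).length := by simp
      have hlenb : (base x.1 r).1.length = (base x'.1 r).1.length := by
        rw [base_len _ _ hr, base_len _ _ hr]
      obtain ⟨hbs, hbase⟩ := sol_inj hlen2 hlenb hLL
      have h1 : x.1 = x'.1 := by
        by_contra hne
        cases hx1 : x.1 <;> cases hx2 : x'.1 <;> rw [hx1, hx2] at hbase <;>
          first
            | (exact hne (hx1.trans hx2.symm))
            | (exact absurd hbase (base_injb r hr))
            | (exact absurd hbase.symm (base_injb r hr))
      have h2 : x.2 = x'.2 := List.ofFn_injective hbs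
      exact Prod.ext h1 h2
    calc 2 * 2 ^ k = Nat.card (Bool × (Fin k → Bool)) := by
          simp [Nat.card_eq_fintype_card]
      _ ≤ Z n := Nat.card_le_card_of_injective Φ hΦinj
  refine ⟨hmain, ?_, ?_⟩
  · calc 2 ^ n ≤ 2 ^ (6 + 3 * k) := Nat.pow_le_pow_right (by norm_num) (by omega)
      _ = 8 * (2 * 2 ^ k) ^ 3 := by
          rw [pow_add, mul_pow, ← pow_mul]; ring
      _ ≤ 8 * (Z n) ^ 3 := Nat.mul_le_mul_left _ (Nat.pow_le_pow_left hmain 3)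
  · have h2 : 2 ^ n ≤ 8 * (Z n) ^ 3 := by
      calc 2 ^ n ≤ 2 ^ (6 + 3 * k) := Nat.pow_le_pow_right (by norm_num) (by omega)
        _ = 8 * (2 * 2 ^ k) ^ 3 := by rw [pow_add, mul_pow, ← pow_mul]; ring
        _ ≤ 8 * (Z n) ^ 3 := Nat.mul_le_mul_left _ (Nat.pow_le_pow_left hmain 3)
    have h2R : (2 : ℝ) ^ n ≤ (2 * (Z n : ℝ)) ^ 3 := by
      have := (Nat.cast_le (α := ℝ)).2 h2
      push_cast at this
      nlinarith [this]
    set a : ℝ := (2 : ℝ) ^ ((n : ℝ) / 3) with ha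
    have hapos : 0 < a := Real.rpow_pos_of_pos (by norm_num) _
    have ha3 : a ^ 3 = (2 : ℝ) ^ n := by
      rw [ha, ← Real.rpow_natCast ((2:ℝ) ^ ((n:ℝ)/3)) 3, ← Real.rpow_mul (by norm_num)]
      rw [show (n : ℝ) / 3 * (3 : ℕ) = (n : ℝ) by push_cast; ring]
      rw [Real.rpow_natCast]
    have hcube : a ^ 3 ≤ (2 * (Z n : ℝ)) ^ 3 := by rw [ha3]; exact h2R
    have hfinal : a ≤ 2 * (Z n : ℝ) := by
      have hz : (0 : ℝ) ≤ 2 * (Z n : ℝ) := by positivity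
      exact le_of_pow_le_pow_left₀ (by norm_num) hz hcube
    linarith
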